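/- If x lies in the distance preserving region of x_i and y lies in the distance preserving region of x_j (for distinct points x_i, x_j of χ), then ‖x − y‖ ≥ ‖x_i − x_j‖. -/
import Mathlib

open scoped RealInnerProductSpace

abbrev Pt := EuclideanSpace ℝ (Fin 2)

theorem dpcir_distance_preserving (χ : Finset Pt) (xi xj : Pt)
    (hxi : xi ∈ χ) (hxj : xj ∈ χ) (hne : xi ≠ xj) (x y : Pt)
    (hx : ∀ xk ∈ χ, xk ≠ xi →
      ⟪xi - xk, x⟫ ≥ ⟪xi - xk, (2:ℝ)⁻¹ • (xi + xk)⟫ + ‖xi - xk‖^2 / 2)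
    (hy : ∀ xk ∈ χ, xk ≠ xj →
      ⟪xj - xk, y⟫ ≥ ⟪xj - xk, (2:ℝ)⁻¹ • (xj + xk)⟫ + ‖xj - xk‖^2 / 2) :
    ‖x - y‖ ≥ ‖xi - xj‖ := by
  have h1 := hx xj hxj (Ne.symm hne)
  have h2 := hy xi hxi hne
  have hd : (0:ℝ) < ‖xi - xj‖ := by
    simpa [sub_eq_zero] using (norm_pos_iff.mpr (sub_ne_zero.mpr hne))
  have hswap : xj - xi = -(xi - xj) := by abel
  have hkey : ‖xi - xj‖^2 ≤ ⟪xi - xj, x - y⟫ := by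
    have h2' : ⟪xi - xj, y⟫ ≤ ⟪xi - xj, (2:ℝ)⁻¹ • (xi + xj)⟫ - ‖xi - xj‖^2 / 2 := by
      rw [hswap, inner_neg_left, inner_neg_left, norm_neg, add_comm xj xi] at h2
      linarith
    have := inner_sub_right (𝕜 := ℝ) (xi - xj) x y
    rw [this]
    linarith
  have hcs : ⟪xi - xj, x - y⟫ ≤ ‖xi - xj‖ * ‖x - y‖ := real_inner_le_norm _ _
  nlinarith [hkey, hcs, hd]
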